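/- arXiv:1901.05757 — 2 statements merged into one kernel-verified Lean document; each statement's English description precedes it below -/
import Mathlib

section
/- The set of observable nodes is generic: fix N, a zero-pattern E ⊆ {1,…,N} × {1,…,N} for the matrix A, and a sensor matrix C ∈ ℝ^{P×N} whose rows are standard basis vectors. For a parameter vector w : E → ℝ let A(w) be the matrix whose (i,j)-entry is w(i,j) if (i,j) ∈ E and 0 otherwise. Then there exist a set 𝒪* ⊆ {1,…,N} and a set Z ⊆ ℝ^E of Lebesgue measure zero such that for every w ∉ Z, the set of observable nodes of the pair (A(w), C), namely { i : e_i lies in the row space of the observability matrix [C; CA(w); …; CA(w)^{N-1}] }, equals 𝒪*. -/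
open Matrix

/-- The observability matrix `O(A,C) = [C; CA; CA²; …; CA^{N-1}]`, with the row indexed by
`(k, p)` equal to the `p`-th row of `C * A^k`. -/
def obsMat (N P : ℕ) (A : Matrix (Fin N) (Fin N) ℝ) (C : Matrix (Fin P) (Fin N) ℝ) :
    Matrix (Fin N × Fin P) (Fin N) ℝ :=
  fun kp j => (C * A ^ (kp.1 : ℕ)) kp.2 j

/-- The structured matrix with zero-pattern `E` and free entries given by `w : E → ℝ`. -/
def structMat (N : ℕ) (E : Finset (Fin N × Fin N)) (w : E → ℝ) :
    Matrix (Fin N) (Fin N) ℝ :=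
  fun a b => if h : (a, b) ∈ E then w ⟨(a, b), h⟩ else 0

open MeasureTheory MvPolynomial Submodule

lemma polyFin_null : ∀ (n : ℕ) (p : MvPolynomial (Fin n) ℝ), p ≠ 0 →
    volume {x : Fin n → ℝ | MvPolynomial.eval x p = 0} = 0 := by
  intro n
  induction n with
  | zero =>
    intro p hp
    obtain ⟨a, rfl⟩ := MvPolynomial.C_surjective (Fin 0) p
    have ha : a ≠ 0 := fun h => hp (by simp [h])
    have h2 : {x : Fin 0 → ℝ | MvPolynomial.eval x (C a) = 0} = ∅ := by
      ext x; simp [ha]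
    rw [h2]; exact measure_empty
  | succ n ih =>
    intro p hp
    set Q : Polynomial (MvPolynomial (Fin n) ℝ) := MvPolynomial.finSuccEquiv ℝ n p with hQ
    have hQ0 : Q ≠ 0 := fun h => hp ((map_eq_zero_iff _ (MvPolynomial.finSuccEquiv ℝ n).injective).mp h)
    set S : Set (Fin (n+1) → ℝ) := {x | MvPolynomial.eval x p = 0} with hS
    have hSm : MeasurableSet S :=
      (isClosed_singleton.preimage (MvPolynomial.continuous_eval p)).measurableSet
    have hmp := (measurePreserving_piFinSuccAbove (fun _ : Fin (n+1) => (volume : Measure ℝ)) 0).symm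
    set e := (MeasurableEquiv.piFinSuccAbove (fun _ : Fin (n+1) => ℝ) 0).symm with he
    have hvol : volume S = ((volume : Measure ℝ).prod (Measure.pi fun _ : Fin n => volume)) (e ⁻¹' S) := by
      rw [volume_pi, ← hmp.measure_preimage hSm.nullMeasurableSet]
    rw [hvol, Measure.measure_prod_null (e.measurable hSm)]
    -- bad set of t is finite
    have hTfin : {t : ℝ | Polynomial.eval (MvPolynomial.C t) Q = 0}.Finite := by
      have h1 : {t : ℝ | Polynomial.eval (MvPolynomial.C t) Q = 0} =
          (MvPolynomial.C : ℝ →+* MvPolynomial (Fin n) ℝ) ⁻¹' {z | Q.IsRoot z} := rfl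
      rw [h1]
      exact (Polynomial.finite_setOf_isRoot hQ0).preimage (MvPolynomial.C_injective _ _).injOn
    have key : ∀ t : ℝ, Polynomial.eval (MvPolynomial.C t) Q ≠ 0 →
        (Measure.pi fun _ : Fin n => (volume : Measure ℝ)) (Prod.mk t ⁻¹' (e ⁻¹' S)) = 0 := by
      intro t ht
      have hslice : Prod.mk t ⁻¹' (e ⁻¹' S) =
          {y : Fin n → ℝ | MvPolynomial.eval y (Polynomial.eval (MvPolynomial.C t) Q) = 0} := by
        ext y
        have hey : e (t, y) = Fin.cons t y := by
          simp [he, MeasurableEquiv.piFinSuccAbove, Fin.insertNthEquiv]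
        simp only [Set.mem_preimage, hS, Set.mem_setOf_eq, hey]
        rw [MvPolynomial.eval_eq_eval_mv_eval' y t p, ← hQ, Polynomial.eval_map]
        have : (MvPolynomial.eval y) (Polynomial.eval (MvPolynomial.C t) Q) =
            Polynomial.eval₂ (MvPolynomial.eval y) t Q := by
          rw [Polynomial.eval, Polynomial.hom_eval₂]
          simp
        rw [this]
      rw [hslice, ← volume_pi]
      exact ih _ ht
    refine Filter.eventuallyEq_iff_exists_mem.mpr ?_
    refine ⟨{t | Polynomial.eval (MvPolynomial.C t) Q = 0}ᶜ, ?_, fun t ht => key t ht⟩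
    rw [mem_ae_iff, compl_compl]
    exact hTfin.measure_zero _

lemma poly_null {σ : Type*} [Fintype σ] (p : MvPolynomial σ ℝ) (hp : p ≠ 0) :
    volume {x : σ → ℝ | MvPolynomial.eval x p = 0} = 0 := by
  classical
  set n := Fintype.card σ
  set e : Fin n ≃ σ := (Fintype.equivFin σ).symm with he
  set q : MvPolynomial (Fin n) ℝ := MvPolynomial.rename e.symm p with hq
  have hq0 : q ≠ 0 := fun h => hp ((MvPolynomial.rename_injective _ e.symm.injective)
    (by rw [← hq, h, map_zero]))
  have hmp := measurePreserving_piCongrLeft (fun _ : σ => (volume : Measure ℝ)) e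
  set f := MeasurableEquiv.piCongrLeft (fun _ : σ => ℝ) e with hf
  have hSm : MeasurableSet {x : σ → ℝ | MvPolynomial.eval x p = 0} :=
    (isClosed_singleton.preimage (MvPolynomial.continuous_eval p)).measurableSet
  have hpre : f ⁻¹' {x : σ → ℝ | MvPolynomial.eval x p = 0} =
      {z : Fin n → ℝ | MvPolynomial.eval z q = 0} := by
    ext z
    simp only [Set.mem_preimage, Set.mem_setOf_eq, hq, MvPolynomial.eval_rename]
    set g := Equiv.piCongrLeft (fun _ : σ => ℝ) e with hg
    have hfg : f z = g z := by rw [hf, MeasurableEquiv.coe_piCongrLeft]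
    have : g z = z ∘ e.symm := by
      apply g.symm.injective
      rw [Equiv.symm_apply_apply]
      funext a
      simp [hg]
    rw [hfg, this]
  calc volume {x : σ → ℝ | MvPolynomial.eval x p = 0}
      = Measure.pi (fun _ : σ => (volume : Measure ℝ)) {x | MvPolynomial.eval x p = 0} := by
        rw [volume_pi]
    _ = Measure.pi (fun _ : Fin n => (volume : Measure ℝ)) (f ⁻¹' {x | MvPolynomial.eval x p = 0}) := by
        rw [← hmp.measure_preimage hSm.nullMeasurableSet]
    _ = 0 := by rw [hpre, ← volume_pi]; exact polyFin_null n q hq0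

lemma gram_criterion {ι n : Type*} [Fintype ι] [DecidableEq ι] [Fintype n]
    (f : ι → n → ℝ) :
    LinearIndependent ℝ f ↔ (Matrix.of fun i j : ι => ∑ k, f i k * f j k).det ≠ 0 := by
  classical
  set T : Matrix ι n ℝ := Matrix.of fun i k => f i k with hT
  have hG : (Matrix.of fun i j : ι => ∑ k, f i k * f j k) = T * Tᵀ := by
    ext i j; simp [Matrix.mul_apply, hT]
  rw [hG]
  have hker : ∀ x : ι → ℝ, (T * Tᵀ) *ᵥ x = 0 ↔ Tᵀ *ᵥ x = 0 := by
    intro x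
    constructor
    · intro h
      have h2 : x ⬝ᵥ ((T * Tᵀ) *ᵥ x) = 0 := by rw [h, dotProduct_zero]
      have h3 : (Tᵀ *ᵥ x) ⬝ᵥ (Tᵀ *ᵥ x) = 0 := by
        have heq : x ⬝ᵥ ((T * Tᵀ) *ᵥ x) = (Tᵀ *ᵥ x) ⬝ᵥ (Tᵀ *ᵥ x) := by
          rw [← Matrix.mulVec_mulVec, Matrix.dotProduct_mulVec, ← Matrix.mulVec_transpose]
        rw [heq] at h2; exact h2
      exact dotProduct_self_eq_zero.mp h3
    · intro h
      rw [← Matrix.mulVec_mulVec, h, Matrix.mulVec_zero]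
  have hsum : ∀ x : ι → ℝ, Tᵀ *ᵥ x = ∑ i, x i • f i := by
    intro x
    funext k
    simp [Matrix.mulVec, dotProduct, Matrix.transpose_apply, hT, Finset.sum_apply,
      mul_comm]
  constructor
  · intro hli hdet
    obtain ⟨v, hv0, hv⟩ := Matrix.exists_mulVec_eq_zero_iff.mpr hdet
    have : Tᵀ *ᵥ v = 0 := (hker v).mp hv
    rw [hsum] at this
    exact hv0 (funext (Fintype.linearIndependent_iff.mp hli v this))
  · intro hdet
    rw [Fintype.linearIndependent_iff]
    intro g hg i
    have h1 : (T * Tᵀ) *ᵥ g = 0 := (hker g).mpr (by rw [hsum]; exact hg)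
    by_contra hgi
    have : g ≠ 0 := fun h => hgi (by rw [h]; rfl)
    exact hdet (Matrix.exists_mulVec_eq_zero_iff.mp ⟨g, this, h1⟩)

lemma card_le_finrank_span {ι V : Type*} [Fintype ι] [AddCommGroup V] [Module ℝ V]
    [FiniteDimensional ℝ V] (f : ι → V) (S : Finset ι)
    (hS : LinearIndependent ℝ (fun i : (S : Set ι) => f i)) :
    S.card ≤ Module.finrank ℝ (span ℝ (Set.range f)) := by
  classical
  set W := span ℝ (Set.range f)
  have hmem : ∀ i : (S : Set ι), f i ∈ W := fun i => subset_span ⟨i, rfl⟩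
  set g := fun i : (S : Set ι) => (⟨f i, hmem i⟩ : W) with hg
  have hgi : LinearIndependent ℝ g := by
    have h : (fun i : (S : Set ι) => f i) = (W.subtype) ∘ g := rfl
    exact LinearIndependent.of_comp W.subtype (by rw [← h]; exact hS)
  have h2 := hgi.fintype_card_le_finrank
  have h3 : Fintype.card (S : Set ι) = S.card := by simp
  rw [h3] at h2
  exact h2

lemma exists_finset_card_eq_finrank_span {ι V : Type*} [Fintype ι] [AddCommGroup V] [Module ℝ V]
    [FiniteDimensional ℝ V] (f : ι → V) :
    ∃ S : Finset ι, LinearIndependent ℝ (fun i : (S : Set ι) => f i) ∧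
      S.card = Module.finrank ℝ (span ℝ (Set.range f)) := by
  classical
  set P : Finset ι → Prop := fun S => LinearIndependent ℝ (fun i : (S : Set ι) => f i) with hP
  have hPempty : P ∅ := by
    rw [hP]
    haveI : IsEmpty ↥((∅ : Finset ι) : Set ι) := ⟨fun x => by simpa using x.2⟩
    apply linearIndependent_empty_type
  set T : Finset (Finset ι) := Finset.univ.filter P with hT
  have hTne : T.Nonempty := ⟨∅, by simp [hT, hPempty]⟩
  obtain ⟨S, hST, hSmax⟩ := Finset.exists_max_image T Finset.card hTne
  have hSP : P S := (Finset.mem_filter.mp hST).2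
  refine ⟨S, hSP, le_antisymm (card_le_finrank_span f S hSP) ?_⟩
  -- every f i lies in span of f '' S
  have hspan : ∀ i : ι, f i ∈ span ℝ (f '' (S : Set ι)) := by
    intro i
    by_contra hi
    have hiS : i ∉ S := fun h => hi (subset_span ⟨i, h, rfl⟩)
    have hins : LinearIndependent ℝ (fun x : ↥(insert i (S : Set ι)) => f x) :=
      (linearIndepOn_insert (by simpa using hiS)).mpr ⟨hSP, hi⟩
    have hins' : P (insert i S) := by
      simp only [hP]
      have hco : ((insert i S : Finset ι) : Set ι) = insert i (S : Set ι) := by simp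
      rw [hco]
      exact hins
    have hle := hSmax (insert i S) (Finset.mem_filter.mpr ⟨Finset.mem_univ _, hins'⟩)
    rw [Finset.card_insert_of_notMem hiS] at hle
    omega
  have hspan2 : span ℝ (Set.range f) = span ℝ (f '' (S : Set ι)) := by
    apply le_antisymm
    · rw [span_le]
      rintro x ⟨i, rfl⟩
      exact hspan i
    · apply span_mono
      rintro x ⟨i, _, rfl⟩
      exact ⟨i, rfl⟩
  rw [hspan2]
  calc Module.finrank ℝ (span ℝ (f '' (S : Set ι)))
      ≤ (f '' (S : Set ι)).toFinset.card := finrank_span_le_card _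
    _ ≤ S.card := by
        rw [Set.toFinset_image]
        simpa using Finset.card_image_le

lemma finrank_span_eq_of_pattern {ι V : Type*} [Fintype ι] [AddCommGroup V] [Module ℝ V]
    [FiniteDimensional ℝ V] (f g : ι → V)
    (h : ∀ S : Finset ι, LinearIndependent ℝ (fun i : (S : Set ι) => f i) ↔
        LinearIndependent ℝ (fun i : (S : Set ι) => g i)) :
    Module.finrank ℝ (span ℝ (Set.range f)) = Module.finrank ℝ (span ℝ (Set.range g)) := by
  apply le_antisymm
  · obtain ⟨S, hLI, hcard⟩ := exists_finset_card_eq_finrank_span f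
    rw [← hcard]
    exact card_le_finrank_span g S ((h S).mp hLI)
  · obtain ⟨S, hLI, hcard⟩ := exists_finset_card_eq_finrank_span g
    rw [← hcard]
    exact card_le_finrank_span f S ((h S).mpr hLI)

lemma mem_span_iff_finrank {m V : Type*} [Fintype m] [AddCommGroup V] [Module ℝ V]
    [FiniteDimensional ℝ V] (v : m → V) (u : V) :
    u ∈ span ℝ (Set.range v) ↔
      Module.finrank ℝ (span ℝ (Set.range (Sum.elim v (fun _ : Unit => u)))) =
        Module.finrank ℝ (span ℝ (Set.range v)) := by
  have hle : span ℝ (Set.range v) ≤ span ℝ (Set.range (Sum.elim v (fun _ : Unit => u))) := by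
    apply span_mono
    rintro x ⟨i, rfl⟩
    exact ⟨Sum.inl i, rfl⟩
  constructor
  · intro hu
    have heq : span ℝ (Set.range (Sum.elim v (fun _ : Unit => u))) = span ℝ (Set.range v) := by
      apply le_antisymm _ hle
      rw [span_le]
      rintro x ⟨i, rfl⟩
      cases i with
      | inl i => exact subset_span ⟨i, rfl⟩
      | inr _ => exact hu
    rw [heq]
  · intro hrank
    have heq : span ℝ (Set.range v) = span ℝ (Set.range (Sum.elim v (fun _ : Unit => u))) :=
      Submodule.eq_of_le_of_finrank_le hle (le_of_eq hrank)
    rw [heq]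
    exact subset_span ⟨Sum.inr (), rfl⟩

/-- Genericity of the set of observable nodes: for a fixed zero-pattern `E` of `A` and a fixed
sensor matrix `C` whose rows are standard basis vectors, there are a set `𝒪*` of nodes and a
Lebesgue-null set `Z ⊆ ℝ^E` such that for every parameter vector `w ∉ Z` the set of observable
nodes of `(A(w), C)` equals `𝒪*`. -/
theorem stmt_6 (N P : ℕ) (E : Finset (Fin N × Fin N)) (C : Matrix (Fin P) (Fin N) ℝ)
    (hC : ∀ p : Fin P, ∃ j : Fin N, C p = Pi.single j 1) :
    ∃ (Ostar : Set (Fin N)) (Z : Set (E → ℝ)),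
      MeasureTheory.volume Z = 0 ∧
      ∀ w : E → ℝ, w ∉ Z →
        {i : Fin N |
          Pi.single i (1 : ℝ) ∈
            Submodule.span ℝ (Set.range (obsMat N P (structMat N E w) C))} = Ostar := by
  classical
  set κ := {x // x ∈ E}
  set R := MvPolynomial κ ℝ
  set m := Fin N × Fin P
  -- polynomial matrices
  set Apoly : Matrix (Fin N) (Fin N) R :=
    fun a b => if h : (a, b) ∈ E then MvPolynomial.X ⟨(a, b), h⟩ else 0 with hApoly
  set Cpoly : Matrix (Fin P) (Fin N) R := C.map MvPolynomial.C with hCpoly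
  set Opoly : Matrix m (Fin N) R := fun kp j => (Cpoly * Apoly ^ (kp.1 : ℕ)) kp.2 j with hOpoly
  set Fpoly : Fin N → (m ⊕ Unit) → Fin N → R :=
    fun i => Sum.elim (fun r j => Opoly r j)
      (fun _ j => if j = i then 1 else 0) with hFpoly
  -- evaluation facts
  have hmapA : ∀ w : E → ℝ, Apoly.map (MvPolynomial.eval w) = structMat N E w := by
    intro w
    ext a b
    rw [Matrix.map_apply]
    simp only [hApoly, structMat]
    split_ifs with h
    · simp
    · simp
  have hmapPow : ∀ (w : E → ℝ) (k : ℕ),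
      (Apoly ^ k).map (MvPolynomial.eval w) = (structMat N E w) ^ k := by
    intro w k
    induction k with
    | zero => simp [Matrix.map_one]
    | succ k ih => rw [pow_succ, pow_succ, Matrix.map_mul, ih, hmapA]
  have hmapC : ∀ w : E → ℝ, Cpoly.map (MvPolynomial.eval w) = C := by
    intro w
    ext p j
    simp [hCpoly]
  have hOe : ∀ (w : E → ℝ) (r : m) (j : Fin N),
      MvPolynomial.eval w (Opoly r j) = obsMat N P (structMat N E w) C r j := by
    intro w r j
    have h1 : (Cpoly * Apoly ^ (r.1 : ℕ)).map (MvPolynomial.eval w)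
        = C * (structMat N E w) ^ (r.1 : ℕ) := by
      rw [Matrix.map_mul, hmapPow, hmapC]
    have h2 := congrArg (fun M => M r.2 j) h1
    simpa [Matrix.map_apply, hOpoly, obsMat] using h2
  -- real row families
  set rows : (E → ℝ) → m → (Fin N → ℝ) :=
    fun w => obsMat N P (structMat N E w) C with hrows
  set Fam : (E → ℝ) → Fin N → (m ⊕ Unit) → (Fin N → ℝ) :=
    fun w i => Sum.elim (rows w) (fun _ => Pi.single i 1) with hFam
  have hFe : ∀ (w : E → ℝ) (i : Fin N) (a : m ⊕ Unit) (j : Fin N),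
      MvPolynomial.eval w (Fpoly i a j) = Fam w i a j := by
    intro w i a j
    cases a with
    | inl r => exact hOe w r j
    | inr _ =>
      simp only [hFpoly, hFam, Sum.elim_inr, Pi.single_apply]
      split_ifs with h
      · simp
      · simp
  -- Gram polynomials
  set qpoly : Finset m → R :=
    fun S => (Matrix.of fun a b : (S : Set m) => ∑ j, Opoly a j * Opoly b j).det with hqpoly
  set ppoly : Fin N → Finset (m ⊕ Unit) → R :=
    fun i S => (Matrix.of fun a b : (S : Set (m ⊕ Unit)) =>
      ∑ j, Fpoly i a j * Fpoly i b j).det with hppoly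
  have hqe : ∀ (w : E → ℝ) (S : Finset m),
      MvPolynomial.eval w (qpoly S)
        = (Matrix.of fun a b : (S : Set m) => ∑ j, rows w a j * rows w b j).det := by
    intro w S
    rw [hqpoly]
    rw [RingHom.map_det (MvPolynomial.eval w)]
    congr 1
    ext a b
    simp [Matrix.map_apply, hOe w]
    rfl
  have hpe : ∀ (w : E → ℝ) (i : Fin N) (S : Finset (m ⊕ Unit)),
      MvPolynomial.eval w (ppoly i S)
        = (Matrix.of fun a b : (S : Set (m ⊕ Unit)) =>
            ∑ j, Fam w i a j * Fam w i b j).det := by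
    intro w i S
    rw [hppoly]
    rw [RingHom.map_det (MvPolynomial.eval w)]
    congr 1
    ext a b
    simp [Matrix.map_apply, hFe w i]
  -- the null set
  set Z : Set (E → ℝ) :=
    (⋃ (S : Finset m) (_ : qpoly S ≠ 0), {w : E → ℝ | MvPolynomial.eval w (qpoly S) = 0}) ∪
    (⋃ (i : Fin N) (S : Finset (m ⊕ Unit)) (_ : ppoly i S ≠ 0),
      {w : E → ℝ | MvPolynomial.eval w (ppoly i S) = 0}) with hZ
  have hZ0 : volume Z = 0 := by
    rw [hZ]
    apply measure_union_null
    · exact measure_iUnion_null fun S => measure_iUnion_null fun h => poly_null _ h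
    · exact measure_iUnion_null fun i => measure_iUnion_null fun S =>
        measure_iUnion_null fun h => poly_null _ h
  -- off Z, independence patterns are fixed
  have hqpat : ∀ w ∉ Z, ∀ S : Finset m,
      LinearIndependent ℝ (fun a : (S : Set m) => rows w a) ↔ qpoly S ≠ 0 := by
    intro w hw S
    rw [gram_criterion, ← hqe w S]
    constructor
    · intro h hq
      exact h (by rw [hq, map_zero])
    · intro hq h
      exact hw (Set.mem_union_left _ (Set.mem_iUnion.mpr ⟨S, Set.mem_iUnion.mpr ⟨hq, h⟩⟩))
  have hppat : ∀ w ∉ Z, ∀ (i : Fin N) (S : Finset (m ⊕ Unit)),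
      LinearIndependent ℝ (fun a : (S : Set (m ⊕ Unit)) => Fam w i a) ↔ ppoly i S ≠ 0 := by
    intro w hw i S
    rw [gram_criterion, ← hpe w i S]
    constructor
    · intro h hq
      exact h (by rw [hq, map_zero])
    · intro hq h
      exact hw (Set.mem_union_right _
        (Set.mem_iUnion.mpr ⟨i, Set.mem_iUnion.mpr ⟨S, Set.mem_iUnion.mpr ⟨hq, h⟩⟩⟩))
  -- membership criterion
  have hmem : ∀ (w : E → ℝ) (i : Fin N),
      (Pi.single i (1:ℝ) ∈ span ℝ (Set.range (rows w)) ↔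
        Module.finrank ℝ (span ℝ (Set.range (Fam w i)))
          = Module.finrank ℝ (span ℝ (Set.range (rows w)))) := by
    intro w i
    exact mem_span_iff_finrank (rows w) (Pi.single i 1)
  -- pick a good parameter
  have hvuniv : volume (Set.univ : Set (E → ℝ)) ≠ 0 := by
    rw [volume_pi, Measure.pi_univ]
    simp [Real.volume_univ]
  have hw0 : ∃ w0 : E → ℝ, w0 ∉ Z := by
    by_contra h
    push_neg at h
    have : (Set.univ : Set (E → ℝ)) ⊆ Z := fun w _ => h w
    exact hvuniv (measure_mono_null this hZ0)
  obtain ⟨w0, hw0⟩ := hw0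
  refine ⟨{i : Fin N | Pi.single i (1:ℝ) ∈ span ℝ (Set.range (rows w0))}, Z, hZ0, ?_⟩
  intro w hw
  ext i
  simp only [Set.mem_setOf_eq]
  have hr : Module.finrank ℝ (span ℝ (Set.range (rows w)))
      = Module.finrank ℝ (span ℝ (Set.range (rows w0))) := by
    apply finrank_span_eq_of_pattern
    intro S
    rw [hqpat w hw S, hqpat w0 hw0 S]
  have hri : Module.finrank ℝ (span ℝ (Set.range (Fam w i)))
      = Module.finrank ℝ (span ℝ (Set.range (Fam w0 i))) := by
    apply finrank_span_eq_of_pattern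
    intro S
    rw [hppat w hw i S, hppat w0 hw0 i S]
  show Pi.single i (1:ℝ) ∈ span ℝ (Set.range (rows w)) ↔ _
  rw [hmem w i, hmem w0 i, hr, hri]
end

section
/- Consider the 8-node network with A the 8×8 real matrix with nonzero entries a₁₅ = 3, a₁₈ = 7, a₃₃ = 2, a₄₂ = 8, a₅₃ = 1, a₅₄ = 1, a₈₆ = 5, a₈₇ = 4, a₈₈ = 1 (all other entries zero) and C = e₁ᵀ ∈ ℝ^{1×8}. Then the observability matrix O(A,C) = [C; CA; …; CA⁷] has rank 6, while the set of indices i such that the standard basis vector e_i lies in the row space of O(A,C) is exactly {1, 2, 3, 4}; hence the network has exactly four observable nodes. -/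
open Matrix

/-- The 8-node example network of the paper. -/
def Aex : Matrix (Fin 8) (Fin 8) ℝ :=
  !![0, 0, 0, 0, 3, 0, 0, 7;
     0, 0, 0, 0, 0, 0, 0, 0;
     0, 0, 2, 0, 0, 0, 0, 0;
     0, 8, 0, 0, 0, 0, 0, 0;
     0, 0, 1, 1, 0, 0, 0, 0;
     0, 0, 0, 0, 0, 0, 0, 0;
     0, 0, 0, 0, 0, 0, 0, 0;
     0, 0, 0, 0, 0, 5, 4, 1]

/-- The sensor matrix `C = e₁ᵀ` of the example. -/
def Cex : Matrix (Fin 1) (Fin 8) ℝ :=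
  !![1, 0, 0, 0, 0, 0, 0, 0]

section helper
variable {α : Type*}
@[simp] lemma consP1_0 (x : α) (u : Fin 1 → α) : vecCons x u (0 : Fin 2) = x := rfl
@[simp] lemma consP1_1 (x : α) (u : Fin 1 → α) : vecCons x u (1 : Fin 2) = u 0 := rfl
@[simp] lemma consP2_0 (x : α) (u : Fin 2 → α) : vecCons x u (0 : Fin 3) = x := rfl
@[simp] lemma consP2_1 (x : α) (u : Fin 2 → α) : vecCons x u (1 : Fin 3) = u 0 := rfl
@[simp] lemma consP2_2 (x : α) (u : Fin 2 → α) : vecCons x u (2 : Fin 3) = u 1 := rfl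
@[simp] lemma consP3_0 (x : α) (u : Fin 3 → α) : vecCons x u (0 : Fin 4) = x := rfl
@[simp] lemma consP3_1 (x : α) (u : Fin 3 → α) : vecCons x u (1 : Fin 4) = u 0 := rfl
@[simp] lemma consP3_2 (x : α) (u : Fin 3 → α) : vecCons x u (2 : Fin 4) = u 1 := rfl
@[simp] lemma consP3_3 (x : α) (u : Fin 3 → α) : vecCons x u (3 : Fin 4) = u 2 := rfl
@[simp] lemma consP4_0 (x : α) (u : Fin 4 → α) : vecCons x u (0 : Fin 5) = x := rfl
@[simp] lemma consP4_1 (x : α) (u : Fin 4 → α) : vecCons x u (1 : Fin 5) = u 0 := rfl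
@[simp] lemma consP4_2 (x : α) (u : Fin 4 → α) : vecCons x u (2 : Fin 5) = u 1 := rfl
@[simp] lemma consP4_3 (x : α) (u : Fin 4 → α) : vecCons x u (3 : Fin 5) = u 2 := rfl
@[simp] lemma consP4_4 (x : α) (u : Fin 4 → α) : vecCons x u (4 : Fin 5) = u 3 := rfl
@[simp] lemma consP5_0 (x : α) (u : Fin 5 → α) : vecCons x u (0 : Fin 6) = x := rfl
@[simp] lemma consP5_1 (x : α) (u : Fin 5 → α) : vecCons x u (1 : Fin 6) = u 0 := rfl
@[simp] lemma consP5_2 (x : α) (u : Fin 5 → α) : vecCons x u (2 : Fin 6) = u 1 := rfl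
@[simp] lemma consP5_3 (x : α) (u : Fin 5 → α) : vecCons x u (3 : Fin 6) = u 2 := rfl
@[simp] lemma consP5_4 (x : α) (u : Fin 5 → α) : vecCons x u (4 : Fin 6) = u 3 := rfl
@[simp] lemma consP5_5 (x : α) (u : Fin 5 → α) : vecCons x u (5 : Fin 6) = u 4 := rfl
@[simp] lemma consP6_0 (x : α) (u : Fin 6 → α) : vecCons x u (0 : Fin 7) = x := rfl
@[simp] lemma consP6_1 (x : α) (u : Fin 6 → α) : vecCons x u (1 : Fin 7) = u 0 := rfl
@[simp] lemma consP6_2 (x : α) (u : Fin 6 → α) : vecCons x u (2 : Fin 7) = u 1 := rfl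
@[simp] lemma consP6_3 (x : α) (u : Fin 6 → α) : vecCons x u (3 : Fin 7) = u 2 := rfl
@[simp] lemma consP6_4 (x : α) (u : Fin 6 → α) : vecCons x u (4 : Fin 7) = u 3 := rfl
@[simp] lemma consP6_5 (x : α) (u : Fin 6 → α) : vecCons x u (5 : Fin 7) = u 4 := rfl
@[simp] lemma consP6_6 (x : α) (u : Fin 6 → α) : vecCons x u (6 : Fin 7) = u 5 := rfl
@[simp] lemma consP7_0 (x : α) (u : Fin 7 → α) : vecCons x u (0 : Fin 8) = x := rfl
@[simp] lemma consP7_1 (x : α) (u : Fin 7 → α) : vecCons x u (1 : Fin 8) = u 0 := rfl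
@[simp] lemma consP7_2 (x : α) (u : Fin 7 → α) : vecCons x u (2 : Fin 8) = u 1 := rfl
@[simp] lemma consP7_3 (x : α) (u : Fin 7 → α) : vecCons x u (3 : Fin 8) = u 2 := rfl
@[simp] lemma consP7_4 (x : α) (u : Fin 7 → α) : vecCons x u (4 : Fin 8) = u 3 := rfl
@[simp] lemma consP7_5 (x : α) (u : Fin 7 → α) : vecCons x u (5 : Fin 8) = u 4 := rfl
@[simp] lemma consP7_6 (x : α) (u : Fin 7 → α) : vecCons x u (6 : Fin 8) = u 5 := rfl
@[simp] lemma consP7_7 (x : α) (u : Fin 7 → α) : vecCons x u (7 : Fin 8) = u 6 := rfl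
@[simp] lemma vecHead_const {n : ℕ} (c : α) : vecHead (fun _ : Fin (n+1) => c) = c := rfl
@[simp] lemma vecTail_const {n : ℕ} (c : α) : vecTail (fun _ : Fin (n+1) => c) = fun _ => c := rfl
end helper

/-- The rows of the observability matrix. -/
noncomputable def obsRows : Fin 8 → (Fin 8 → ℝ) :=
  ![![1,0,0,0,0,0,0,0], ![0,0,0,0,3,0,0,7], ![0,0,3,3,0,35,28,7],
    ![0,24,6,0,0,35,28,7], ![0,0,12,0,0,35,28,7], ![0,0,24,0,0,35,28,7],
    ![0,0,48,0,0,35,28,7], ![0,0,96,0,0,35,28,7]]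

/-- A spanning set of the row space. -/
noncomputable def bvec : Fin 6 → (Fin 8 → ℝ) :=
  ![![1,0,0,0,0,0,0,0], ![0,1,0,0,0,0,0,0], ![0,0,1,0,0,0,0,0],
    ![0,0,0,1,0,0,0,0], ![0,0,0,0,3,0,0,7], ![0,0,0,0,0,35,28,7]]

lemma obs_mul_succ (k : ℕ) :
    (Cex * Aex ^ (k+1)) 0 = ((Cex * Aex ^ k) 0) ᵥ* Aex := by
  funext j
  rw [pow_succ, ← Matrix.mul_assoc]
  simp [Matrix.mul_apply, Matrix.vecMul, dotProduct]

lemma hrow0 : (Cex * Aex ^ (0:ℕ)) 0 = obsRows 0 := by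
  rw [pow_zero, Matrix.mul_one]; rfl

lemma step1 : (obsRows 0) ᵥ* Aex = obsRows 1 := by
  funext j
  fin_cases j <;>
    norm_num [Matrix.vecMul, dotProduct, Fin.sum_univ_eight, Aex, obsRows]

lemma step2 : (obsRows 1) ᵥ* Aex = obsRows 2 := by
  funext j
  fin_cases j <;>
    norm_num [Matrix.vecMul, dotProduct, Fin.sum_univ_eight, Aex, obsRows]

lemma step3 : (obsRows 2) ᵥ* Aex = obsRows 3 := by
  funext j
  fin_cases j <;>
    norm_num [Matrix.vecMul, dotProduct, Fin.sum_univ_eight, Aex, obsRows]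

lemma step4 : (obsRows 3) ᵥ* Aex = obsRows 4 := by
  funext j
  fin_cases j <;>
    norm_num [Matrix.vecMul, dotProduct, Fin.sum_univ_eight, Aex, obsRows]

lemma step5 : (obsRows 4) ᵥ* Aex = obsRows 5 := by
  funext j
  fin_cases j <;>
    norm_num [Matrix.vecMul, dotProduct, Fin.sum_univ_eight, Aex, obsRows]

lemma step6 : (obsRows 5) ᵥ* Aex = obsRows 6 := by
  funext j
  fin_cases j <;>
    norm_num [Matrix.vecMul, dotProduct, Fin.sum_univ_eight, Aex, obsRows]

lemma step7 : (obsRows 6) ᵥ* Aex = obsRows 7 := by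
  funext j
  fin_cases j <;>
    norm_num [Matrix.vecMul, dotProduct, Fin.sum_univ_eight, Aex, obsRows]

lemma hrow1 : (Cex * Aex ^ (1:ℕ)) 0 = obsRows 1 :=
  (obs_mul_succ 0).trans (by rw [hrow0]; exact step1)
lemma hrow2 : (Cex * Aex ^ (2:ℕ)) 0 = obsRows 2 :=
  (obs_mul_succ 1).trans (by rw [hrow1]; exact step2)
lemma hrow3 : (Cex * Aex ^ (3:ℕ)) 0 = obsRows 3 :=
  (obs_mul_succ 2).trans (by rw [hrow2]; exact step3)
lemma hrow4 : (Cex * Aex ^ (4:ℕ)) 0 = obsRows 4 :=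
  (obs_mul_succ 3).trans (by rw [hrow3]; exact step4)
lemma hrow5 : (Cex * Aex ^ (5:ℕ)) 0 = obsRows 5 :=
  (obs_mul_succ 4).trans (by rw [hrow4]; exact step5)
lemma hrow6 : (Cex * Aex ^ (6:ℕ)) 0 = obsRows 6 :=
  (obs_mul_succ 5).trans (by rw [hrow5]; exact step6)
lemma hrow7 : (Cex * Aex ^ (7:ℕ)) 0 = obsRows 7 :=
  (obs_mul_succ 6).trans (by rw [hrow6]; exact step7)

lemma hrow (kp : Fin 8 × Fin 1) : obsMat 8 1 Aex Cex kp = obsRows kp.1 := by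
  obtain ⟨k, p⟩ := kp
  fin_cases p
  fin_cases k
  · exact hrow0
  · exact hrow1
  · exact hrow2
  · exact hrow3
  · exact hrow4
  · exact hrow5
  · exact hrow6
  · exact hrow7

lemma hrange : Set.range (obsMat 8 1 Aex Cex) = Set.range obsRows := by
  ext v
  constructor
  · rintro ⟨kp, rfl⟩; exact ⟨kp.1, (hrow kp).symm⟩
  · rintro ⟨k, rfl⟩; exact ⟨(k, 0), hrow (k, 0)⟩

set_option maxHeartbeats 2000000 in
lemma hspan :
    Submodule.span ℝ (Set.range obsRows) = Submodule.span ℝ (Set.range bvec) := by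
  apply le_antisymm <;> rw [Submodule.span_le] <;> rintro v ⟨k, rfl⟩
  · fin_cases k
    · exact Submodule.subset_span ⟨0, rfl⟩
    · exact Submodule.subset_span ⟨4, rfl⟩
    · have h : obsRows 2 = (3:ℝ) • bvec 2 + (3:ℝ) • bvec 3 + bvec 5 := by
        funext j; fin_cases j <;> norm_num [obsRows, bvec]
      rw [show (⟨2, by norm_num⟩ : Fin 8) = 2 from rfl, h]
      exact Submodule.add_mem _ (Submodule.add_mem _
        (Submodule.smul_mem _ _ (Submodule.subset_span ⟨2, rfl⟩))
        (Submodule.smul_mem _ _ (Submodule.subset_span ⟨3, rfl⟩)))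
        (Submodule.subset_span ⟨5, rfl⟩)
    · have h : obsRows 3 = (24:ℝ) • bvec 1 + (6:ℝ) • bvec 2 + bvec 5 := by
        funext j; fin_cases j <;> norm_num [obsRows, bvec]
      rw [show (⟨3, by norm_num⟩ : Fin 8) = 3 from rfl, h]
      exact Submodule.add_mem _ (Submodule.add_mem _
        (Submodule.smul_mem _ _ (Submodule.subset_span ⟨1, rfl⟩))
        (Submodule.smul_mem _ _ (Submodule.subset_span ⟨2, rfl⟩)))
        (Submodule.subset_span ⟨5, rfl⟩)
    · have h : obsRows 4 = (12:ℝ) • bvec 2 + bvec 5 := by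
        funext j; fin_cases j <;> norm_num [obsRows, bvec]
      rw [show (⟨4, by norm_num⟩ : Fin 8) = 4 from rfl, h]
      exact Submodule.add_mem _
        (Submodule.smul_mem _ _ (Submodule.subset_span ⟨2, rfl⟩))
        (Submodule.subset_span ⟨5, rfl⟩)
    · have h : obsRows 5 = (24:ℝ) • bvec 2 + bvec 5 := by
        funext j; fin_cases j <;> norm_num [obsRows, bvec]
      rw [show (⟨5, by norm_num⟩ : Fin 8) = 5 from rfl, h]
      exact Submodule.add_mem _
        (Submodule.smul_mem _ _ (Submodule.subset_span ⟨2, rfl⟩))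
        (Submodule.subset_span ⟨5, rfl⟩)
    · have h : obsRows 6 = (48:ℝ) • bvec 2 + bvec 5 := by
        funext j; fin_cases j <;> norm_num [obsRows, bvec]
      rw [show (⟨6, by norm_num⟩ : Fin 8) = 6 from rfl, h]
      exact Submodule.add_mem _
        (Submodule.smul_mem _ _ (Submodule.subset_span ⟨2, rfl⟩))
        (Submodule.subset_span ⟨5, rfl⟩)
    · have h : obsRows 7 = (96:ℝ) • bvec 2 + bvec 5 := by
        funext j; fin_cases j <;> norm_num [obsRows, bvec]
      rw [show (⟨7, by norm_num⟩ : Fin 8) = 7 from rfl, h]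
      exact Submodule.add_mem _
        (Submodule.smul_mem _ _ (Submodule.subset_span ⟨2, rfl⟩))
        (Submodule.subset_span ⟨5, rfl⟩)
  · fin_cases k
    · exact Submodule.subset_span ⟨0, rfl⟩
    · have h : bvec 1 = (1/24:ℝ) • obsRows 3 + (-(1/16):ℝ) • obsRows 4
          + (1/48:ℝ) • obsRows 5 := by
        funext j; fin_cases j <;> norm_num [obsRows, bvec]
      rw [show (⟨1, by norm_num⟩ : Fin 6) = 1 from rfl, h]
      exact Submodule.add_mem _ (Submodule.add_mem _
        (Submodule.smul_mem _ _ (Submodule.subset_span ⟨3, rfl⟩))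
        (Submodule.smul_mem _ _ (Submodule.subset_span ⟨4, rfl⟩)))
        (Submodule.smul_mem _ _ (Submodule.subset_span ⟨5, rfl⟩))
    · have h : bvec 2 = (1/12:ℝ) • obsRows 5 + (-(1/12):ℝ) • obsRows 4 := by
        funext j; fin_cases j <;> norm_num [obsRows, bvec]
      rw [show (⟨2, by norm_num⟩ : Fin 6) = 2 from rfl, h]
      exact Submodule.add_mem _
        (Submodule.smul_mem _ _ (Submodule.subset_span ⟨5, rfl⟩))
        (Submodule.smul_mem _ _ (Submodule.subset_span ⟨4, rfl⟩))
    · have h : bvec 3 = (1/3:ℝ) • obsRows 2 + (-(7/12):ℝ) • obsRows 4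
          + (1/4:ℝ) • obsRows 5 := by
        funext j; fin_cases j <;> norm_num [obsRows, bvec]
      rw [show (⟨3, by norm_num⟩ : Fin 6) = 3 from rfl, h]
      exact Submodule.add_mem _ (Submodule.add_mem _
        (Submodule.smul_mem _ _ (Submodule.subset_span ⟨2, rfl⟩))
        (Submodule.smul_mem _ _ (Submodule.subset_span ⟨4, rfl⟩)))
        (Submodule.smul_mem _ _ (Submodule.subset_span ⟨5, rfl⟩))
    · exact Submodule.subset_span ⟨1, rfl⟩
    · have h : bvec 5 = (2:ℝ) • obsRows 4 + (-1:ℝ) • obsRows 5 := by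
        funext j; fin_cases j <;> norm_num [obsRows, bvec]
      rw [show (⟨5, by norm_num⟩ : Fin 6) = 5 from rfl, h]
      exact Submodule.add_mem _
        (Submodule.smul_mem _ _ (Submodule.subset_span ⟨4, rfl⟩))
        (Submodule.smul_mem _ _ (Submodule.subset_span ⟨5, rfl⟩))

lemma bvec_li : LinearIndependent ℝ bvec := by
  rw [Fintype.linearIndependent_iff]
  intro g hg
  have h0 := congrFun hg 0
  have h1 := congrFun hg 1
  have h2 := congrFun hg 2
  have h3 := congrFun hg 3
  have h4 := congrFun hg 4
  have h5 := congrFun hg 5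
  simp only [Fin.sum_univ_six, Pi.add_apply, Pi.smul_apply, smul_eq_mul, Pi.zero_apply, bvec,
    consP5_0, consP5_1, consP5_2, consP5_3, consP5_4, consP5_5,
    consP7_0, consP7_1, consP7_2, consP7_3, consP7_4, consP7_5, consP7_6, consP7_7,
    consP6_0, consP6_1, consP6_2, consP6_3, consP6_4, consP6_5,
    consP4_0, consP4_1, consP4_2, consP4_3,
    consP3_0, consP3_1, consP3_2, consP2_0, consP2_1, consP1_0, consP1_1] at h0 h1 h2 h3 h4 h5
  norm_num at h0 h1 h2 h3 h4 h5
  intro i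
  fin_cases i <;> simp <;> linarith

/-- A coordinate functional. -/
noncomputable def phi (c : Fin 8 → ℝ) : (Fin 8 → ℝ) →ₗ[ℝ] ℝ where
  toFun x := ∑ j, c j * x j
  map_add' x y := by simp [mul_add, Finset.sum_add_distrib]
  map_smul' t x := by simp [Finset.mul_sum, mul_left_comm]

lemma phi_single (c : Fin 8 → ℝ) (i : Fin 8) : phi c (Pi.single i 1) = c i := by
  simp [phi, Pi.single_apply, mul_ite, Finset.sum_ite_eq]

lemma phi_vanish (c : Fin 8 → ℝ) (hc : ∀ k, phi c (bvec k) = 0) :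
    ∀ x ∈ Submodule.span ℝ (Set.range bvec), phi c x = 0 := by
  intro x hx
  have h : Submodule.span ℝ (Set.range bvec) ≤ LinearMap.ker (phi c) := by
    rw [Submodule.span_le]
    rintro v ⟨k, rfl⟩
    exact LinearMap.mem_ker.mpr (hc k)
  exact h hx

lemma hphi1 : ∀ k, phi ![0,0,0,0,35,3,0,-15] (bvec k) = 0 := by
  intro k; fin_cases k <;> norm_num [phi, bvec, Fin.sum_univ_eight]

lemma hphi2 : ∀ k, phi ![0,0,0,0,28,0,3,-12] (bvec k) = 0 := by
  intro k; fin_cases k <;> norm_num [phi, bvec, Fin.sum_univ_eight]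

lemma hs0 : Pi.single (0 : Fin 8) (1:ℝ) = bvec 0 := by
  funext j; fin_cases j <;> simp [bvec, Pi.single_apply]
lemma hs1 : Pi.single (1 : Fin 8) (1:ℝ) = bvec 1 := by
  funext j; fin_cases j <;> simp [bvec, Pi.single_apply]
lemma hs2 : Pi.single (2 : Fin 8) (1:ℝ) = bvec 2 := by
  funext j; fin_cases j <;> simp [bvec, Pi.single_apply]
lemma hs3 : Pi.single (3 : Fin 8) (1:ℝ) = bvec 3 := by
  funext j; fin_cases j <;> simp [bvec, Pi.single_apply]

/-- For the 8-node example, the observability matrix has rank 6, while exactly the four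
standard basis vectors `e₁, e₂, e₃, e₄` lie in its row space: the network has exactly four
observable nodes. -/
theorem stmt_13 :
    (obsMat 8 1 Aex Cex).rank = 6 ∧
    {i : Fin 8 | Pi.single i (1 : ℝ) ∈ Submodule.span ℝ (Set.range (obsMat 8 1 Aex Cex))} =
      ({0, 1, 2, 3} : Set (Fin 8)) := by
  have hsp : Submodule.span ℝ (Set.range (obsMat 8 1 Aex Cex))
      = Submodule.span ℝ (Set.range bvec) := by
    rw [hrange, hspan]
  constructor
  · rw [Matrix.rank_eq_finrank_span_row, show (obsMat 8 1 Aex Cex).row = obsMat 8 1 Aex Cex from rfl, hsp, finrank_span_eq_card bvec_li]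
    simp
  · ext i
    simp only [Set.mem_setOf_eq, Set.mem_insert_iff, Set.mem_singleton_iff, hsp]
    constructor
    · intro hmem
      fin_cases i
      · exact Or.inl rfl
      · exact Or.inr (Or.inl rfl)
      · exact Or.inr (Or.inr (Or.inl rfl))
      · exact Or.inr (Or.inr (Or.inr rfl))
      · exfalso
        have hv : phi ![0,0,0,0,35,3,0,-15] (Pi.single (4:Fin 8) (1:ℝ)) = 0 :=
          phi_vanish _ hphi1 _ hmem
        rw [phi_single] at hv; norm_num at hv
      · exfalso
        have hv : phi ![0,0,0,0,35,3,0,-15] (Pi.single (5:Fin 8) (1:ℝ)) = 0 :=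
          phi_vanish _ hphi1 _ hmem
        rw [phi_single] at hv; norm_num at hv
      · exfalso
        have hv : phi ![0,0,0,0,28,0,3,-12] (Pi.single (6:Fin 8) (1:ℝ)) = 0 :=
          phi_vanish _ hphi2 _ hmem
        rw [phi_single] at hv; norm_num at hv
      · exfalso
        have hv : phi ![0,0,0,0,35,3,0,-15] (Pi.single (7:Fin 8) (1:ℝ)) = 0 :=
          phi_vanish _ hphi1 _ hmem
        rw [phi_single] at hv; norm_num at hv
    · rintro (rfl | rfl | rfl | rfl)
      · rw [hs0]; exact Submodule.subset_span ⟨0, rfl⟩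
      · rw [hs1]; exact Submodule.subset_span ⟨1, rfl⟩
      · rw [hs2]; exact Submodule.subset_span ⟨2, rfl⟩
      · rw [hs3]; exact Submodule.subset_span ⟨3, rfl⟩
end
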